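/- Let c : ℤ[G] → ΛH be the ring homomorphism from the group ring of the free group G on generators γ_1,...,γ_k to the exterior algebra of H = G^{ab}, defined by γ_i ↦ 1 + [γ_i] and γ_i^{-1} ↦ 1 − [γ_i]. Let c₂ be its component in Λ²H. Then for the element ζ_g = γ₁γ₂γ₁⁻¹γ₂⁻¹ ⋯ γ_{2g-1}γ_{2g}γ_{2g-1}⁻¹γ_{2g}⁻¹ in the free group on 2g generators, c₂(ζ_g) = 2ω, where ω = [γ₁]∧[γ₂] + [γ₃]∧[γ₄] + ⋯ + [γ_{2g-1}]∧[γ_{2g}]. -/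

import Mathlib

noncomputable section

/-- The basis vector `[γ_i]` of `H = ℤ^{2g}`. -/
def hbasis (g : ℕ) (i : Fin (2 * g)) : Fin (2 * g) → ℤ := Pi.single i 1

/-- The unit `1 + [γ_i]` of the exterior algebra `ΛH`, with inverse `1 − [γ_i]`. -/
def contentUnit (g : ℕ) (i : Fin (2 * g)) : (ExteriorAlgebra ℤ (Fin (2 * g) → ℤ))ˣ where
  val := 1 + ExteriorAlgebra.ι ℤ (hbasis g i)
  inv := 1 - ExteriorAlgebra.ι ℤ (hbasis g i)
  val_inv := by
    have h := ExteriorAlgebra.ι_sq_zero (R := ℤ) (hbasis g i)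
    noncomm_ring [h]
  inv_val := by
    have h := ExteriorAlgebra.ι_sq_zero (R := ℤ) (hbasis g i)
    noncomm_ring [h]

/-- The content homomorphism `c`, restricted to the free group `G` on `2g` generators:
the multiplicative map `G → (ΛH)ˣ` with `γ_i ↦ 1 + [γ_i]` (hence `γ_i⁻¹ ↦ 1 − [γ_i]`). -/
def contentHom (g : ℕ) : FreeGroup (Fin (2 * g)) →* (ExteriorAlgebra ℤ (Fin (2 * g) → ℤ))ˣ :=
  FreeGroup.lift (contentUnit g)

/-- `ζ_g = γ₁γ₂γ₁⁻¹γ₂⁻¹ ⋯ γ_{2g−1}γ_{2g}γ_{2g−1}⁻¹γ_{2g}⁻¹`. -/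
def zetaWord (g : ℕ) : FreeGroup (Fin (2 * g)) :=
  (List.ofFn fun i : Fin g =>
    FreeGroup.of (⟨2 * (i : ℕ), by omega⟩ : Fin (2 * g)) *
      FreeGroup.of (⟨2 * (i : ℕ) + 1, by omega⟩ : Fin (2 * g)) *
      (FreeGroup.of (⟨2 * (i : ℕ), by omega⟩ : Fin (2 * g)))⁻¹ *
      (FreeGroup.of (⟨2 * (i : ℕ) + 1, by omega⟩ : Fin (2 * g)))⁻¹).prod

lemma comm_val (g : ℕ) (i j : Fin (2 * g)) :
    ((contentHom g (FreeGroup.of i * FreeGroup.of j * (FreeGroup.of i)⁻¹ * (FreeGroup.of j)⁻¹) :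
        (ExteriorAlgebra ℤ (Fin (2 * g) → ℤ))ˣ) : ExteriorAlgebra ℤ (Fin (2 * g) → ℤ)) =
      1 + 2 • (ExteriorAlgebra.ι ℤ (hbasis g i) * ExteriorAlgebra.ι ℤ (hbasis g j)) := by
  have hi := ExteriorAlgebra.ι_sq_zero (R := ℤ) (hbasis g i)
  have hj := ExteriorAlgebra.ι_sq_zero (R := ℤ) (hbasis g j)
  have hji := ExteriorAlgebra.ι_add_mul_swap (R := ℤ) (hbasis g j) (hbasis g i)
  simp only [contentHom, map_mul, map_inv, FreeGroup.lift_apply_of, Units.val_mul]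
  show ((1 + ExteriorAlgebra.ι ℤ (hbasis g i)) * (1 + ExteriorAlgebra.ι ℤ (hbasis g j))) *
      (1 - ExteriorAlgebra.ι ℤ (hbasis g i)) * (1 - ExteriorAlgebra.ι ℤ (hbasis g j)) = _
  have hji' : ExteriorAlgebra.ι ℤ (hbasis g j) * ExteriorAlgebra.ι ℤ (hbasis g i)
      = -(ExteriorAlgebra.ι ℤ (hbasis g i) * ExteriorAlgebra.ι ℤ (hbasis g j)) :=
    eq_neg_of_add_eq_zero_left hji
  have haab : ExteriorAlgebra.ι ℤ (hbasis g i) *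
      (ExteriorAlgebra.ι ℤ (hbasis g i) * ExteriorAlgebra.ι ℤ (hbasis g j)) = 0 := by
    rw [← mul_assoc, hi, zero_mul]
  noncomm_ring [hi, hj, hji', haab]

lemma key (g : ℕ) (L : List (ExteriorAlgebra ℤ (Fin (2 * g) → ℤ)))
    (h : ∀ x ∈ L, x ∈ ⋀[ℤ]^2 (Fin (2 * g) → ℤ)) :
    GradedAlgebra.proj (fun i : ℕ => ⋀[ℤ]^i (Fin (2 * g) → ℤ)) 0
        ((L.map (fun x => 1 + 2 • x)).prod) = 1 ∧
    GradedAlgebra.proj (fun i : ℕ => ⋀[ℤ]^i (Fin (2 * g) → ℤ)) 2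
        ((L.map (fun x => 1 + 2 • x)).prod) = 2 • L.sum := by
  set 𝒜 := fun i : ℕ => ⋀[ℤ]^i (Fin (2 * g) → ℤ) with h𝒜
  induction L with
  | nil =>
    constructor
    · simp only [List.map_nil, List.prod_nil, GradedAlgebra.proj_apply]
      exact DirectSum.decompose_of_mem_same 𝒜 (SetLike.one_mem_graded 𝒜)
    · simp only [List.map_nil, List.prod_nil, List.sum_nil, smul_zero, GradedAlgebra.proj_apply]
      exact DirectSum.decompose_of_mem_ne 𝒜 (SetLike.one_mem_graded 𝒜)
        (by norm_num : (0:ℕ) ≠ 2)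
  | cons x L ih =>
    have hx : x ∈ 𝒜 2 := h x List.mem_cons_self
    have hL : ∀ y ∈ L, y ∈ ⋀[ℤ]^2 (Fin (2 * g) → ℤ) := fun y hy => h y (List.mem_cons_of_mem _ hy)
    obtain ⟨ih0, ih2⟩ := ih hL
    simp only [List.map_cons, List.prod_cons, List.sum_cons]
    have expand : (1 + 2 • x) * (L.map (fun x => 1 + 2 • x)).prod =
        (L.map (fun x => 1 + 2 • x)).prod + 2 • (x * (L.map (fun x => 1 + 2 • x)).prod) := by
      rw [add_mul, one_mul, smul_mul_assoc]
    constructor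
    · rw [expand, map_add, map_nsmul, ih0, GradedAlgebra.proj_apply,
        DirectSum.coe_decompose_mul_of_left_mem_of_not_le 𝒜 hx (by norm_num)]
      simp
    · rw [expand, map_add, map_nsmul, ih2, GradedAlgebra.proj_apply,
        DirectSum.coe_decompose_mul_of_left_mem_of_le 𝒜 hx (by norm_num : (2:ℕ) ≤ 2)]
      have : (DirectSum.decompose 𝒜 ((L.map (fun x => 1 + 2 • x)).prod) (2 - 2) :
          ExteriorAlgebra ℤ (Fin (2 * g) → ℤ)) = 1 := by
        simpa [GradedAlgebra.proj_apply] using ih0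
      rw [this, mul_one, smul_add, add_comm]

/-- **`c₂(ζ_g) = 2ω`.**  The component in `Λ²H` of the content of the boundary word
`ζ_g` equals `2ω`, where `ω = [γ₁]∧[γ₂] + [γ₃]∧[γ₄] + ⋯ + [γ_{2g−1}]∧[γ_{2g}]`. -/
theorem statement3 (g : ℕ) :
    GradedAlgebra.proj (fun i : ℕ => ⋀[ℤ]^i (Fin (2 * g) → ℤ)) 2
        ((contentHom g (zetaWord g) : (ExteriorAlgebra ℤ (Fin (2 * g) → ℤ))ˣ) :
          ExteriorAlgebra ℤ (Fin (2 * g) → ℤ)) =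
      2 • ∑ i : Fin g,
        ExteriorAlgebra.ι ℤ (hbasis g ⟨2 * (i : ℕ), by omega⟩) *
          ExteriorAlgebra.ι ℤ (hbasis g ⟨2 * (i : ℕ) + 1, by omega⟩) := by
  set ω : Fin g → ExteriorAlgebra ℤ (Fin (2 * g) → ℤ) := fun i =>
    ExteriorAlgebra.ι ℤ (hbasis g ⟨2 * (i : ℕ), by omega⟩) *
      ExteriorAlgebra.ι ℤ (hbasis g ⟨2 * (i : ℕ) + 1, by omega⟩) with hω
  have hc : ((contentHom g (zetaWord g) : (ExteriorAlgebra ℤ (Fin (2 * g) → ℤ))ˣ) :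
      ExteriorAlgebra ℤ (Fin (2 * g) → ℤ)) =
      ((List.ofFn ω).map (fun x => 1 + 2 • x)).prod := by
    rw [zetaWord, map_list_prod, ← Units.coeHom_apply, map_list_prod]
    simp only [List.map_map, List.map_ofFn]
    refine congrArg List.prod ?_
    refine congrArg List.ofFn ?_
    funext i
    simp only [Function.comp_apply, Units.coeHom_apply]
    exact comm_val g ⟨2 * (i : ℕ), by omega⟩ ⟨2 * (i : ℕ) + 1, by omega⟩
  have hmem : ∀ x ∈ List.ofFn ω, x ∈ ⋀[ℤ]^2 (Fin (2 * g) → ℤ) := by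
    intro x hx
    obtain ⟨i, rfl⟩ := List.mem_ofFn.mp hx
    rw [hω]
    show _ ∈ LinearMap.range (ExteriorAlgebra.ι ℤ :
      (Fin (2 * g) → ℤ) →ₗ[ℤ] ExteriorAlgebra ℤ (Fin (2 * g) → ℤ)) ^ 2
    rw [pow_two]
    exact Submodule.mul_mem_mul (LinearMap.mem_range_self _ _) (LinearMap.mem_range_self _ _)
  rw [hc, (key g (List.ofFn ω) hmem).2, List.sum_ofFn]


end
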